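/- Define x̃_i := y_{i−1} λ_{i−1}(x,y,z)/λ_i(x,y,z) and ỹ_i := x_{i+1} λ_{i+1}(x,y,z)/λ_i(x,y,z) for all i ∈ ℤ/nℤ, and z̃ := z. Then λ_i(x̃, ỹ, z̃) = λ_i(x,y,z) for every i ∈ ℤ/nℤ. -/

import Mathlib

noncomputable section

open Finset

/-- `λ_i(x,y,z)` for a cylindric 2-loop expanded directed plabic network with
white-to-black edge weights `x` (left string), `y` (right string) and crossing edge weights
`z`, all indexed by `ZMod n`:
`λ_i = Σ_{j=0}^{n-1} (∏_{k=1}^{j} x_{i+k}) · z_{i+j} · (∏_{k=j+1}^{n-1} y_{i+k})`. -/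
def lam (n : ℕ) (x y z : ZMod n → ℝ) (i : ZMod n) : ℝ :=
  ∑ j ∈ Finset.range n,
    (∏ k ∈ Finset.Icc 1 j, x (i + (k : ZMod n))) * z (i + (j : ZMod n)) *
      ∏ k ∈ Finset.Icc (j + 1) (n - 1), y (i + (k : ZMod n))

namespace LamAux

variable {n : ℕ} [NeZero n]

lemma prod_range_shift (g : ZMod n → ℝ) (a : ZMod n) :
    ∏ k ∈ Finset.range n, g (a + (k : ZMod n)) = ∏ c : ZMod n, g c := by
  refine Finset.prod_nbij' (fun k => a + (k : ZMod n)) (fun c => (c - a).val)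
    (fun k _ => mem_univ _) (fun c _ => mem_range.2 (ZMod.val_lt _)) ?_ ?_ (fun k _ => rfl)
  · intro k hk
    simp only [mem_range] at hk
    show (a + (k : ZMod n) - a).val = k
    rw [show a + (k:ZMod n) - a = (k:ZMod n) by ring, ZMod.val_natCast_of_lt hk]
  · intro c _
    show a + ((c - a).val : ZMod n) = c
    simp [ZMod.natCast_val, ZMod.cast_id]

omit [NeZero n] in
lemma prod_Icc_shift (g : ZMod n → ℝ) (a : ZMod n) (s t : ℕ) :
    ∏ k ∈ Finset.Icc s t, g ((a + 1) + (k : ZMod n)) =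
      ∏ k ∈ Finset.Icc (s + 1) (t + 1), g (a + (k : ZMod n)) := by
  rw [show Finset.Icc (s+1) (t+1) = (Finset.Icc s t).map (addRightEmbedding 1) by
    rw [Finset.map_add_right_Icc], Finset.prod_map]
  refine Finset.prod_congr rfl fun k _ => ?_
  simp only [addRightEmbedding_apply]
  congr 1
  push_cast
  ring

lemma prod_Icc_one_n (g : ZMod n → ℝ) (a : ZMod n) :
    ∏ k ∈ Finset.Icc 1 n, g (a + (k : ZMod n)) = ∏ c : ZMod n, g c := by
  rw [← prod_range_shift g (a + 1), Finset.range_eq_Ico,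
    show Finset.Icc 1 n = (Finset.Ico 0 n).map (addRightEmbedding 1) by
      rw [Finset.map_add_right_Ico]
      rw [show 0 + 1 = 1 from rfl, Finset.Ico_add_one_right_eq_Icc],
    Finset.prod_map]
  refine Finset.prod_congr rfl fun k _ => ?_
  simp only [addRightEmbedding_apply]
  congr 1
  push_cast
  ring

lemma lam_pos (x y z : ZMod n → ℝ) (hx : ∀ i, 0 < x i) (hy : ∀ i, 0 < y i)
    (hz : ∀ i, 0 < z i) (a : ZMod n) : 0 < lam n x y z a := by
  refine Finset.sum_pos (fun j _ => ?_) ?_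
  · exact mul_pos (mul_pos (Finset.prod_pos fun _ _ => hx _) (hz _))
      (Finset.prod_pos fun _ _ => hy _)
  · simp only [Finset.nonempty_range_iff]
    exact NeZero.ne n

omit [NeZero n] in
lemma telescope (f : ℕ → ℝ) (m : ℕ) :
    ∑ j ∈ Finset.range m, f (j + 1) - ∑ j ∈ Finset.range m, f j = f m - f 0 := by
  have h1 := Finset.sum_range_succ' f m
  have h2 := Finset.sum_range_succ f m
  linarith [h1, h2]

/-- key recurrence -/
lemma key (x y z : ZMod n → ℝ) (a : ZMod n) :
    y a * lam n x y z a + z a * (∏ c : ZMod n, x c) =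
      x (a + 1) * lam n x y z (a + 1) + z a * (∏ c : ZMod n, y c) := by
  have hn : 1 ≤ n := Nat.one_le_iff_ne_zero.2 (NeZero.ne n)
  set T : ℕ → ℝ := fun j =>
    (∏ k ∈ Finset.Icc 1 j, x (a + (k : ZMod n))) * z (a + (j : ZMod n)) *
      ∏ k ∈ Finset.Icc (j + 1) n, y (a + (k : ZMod n)) with hT
  have hTj : ∀ j, T j = (∏ k ∈ Finset.Icc 1 j, x (a + (k : ZMod n))) * z (a + (j : ZMod n)) *
      ∏ k ∈ Finset.Icc (j + 1) n, y (a + (k : ZMod n)) := fun j => rfl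
  have h1 : y a * lam n x y z a = ∑ j ∈ Finset.range n, T j := by
    rw [lam, Finset.mul_sum]
    refine Finset.sum_congr rfl fun j hj => ?_
    have hj' : j + 1 ≤ n := mem_range.1 hj
    have hy' : ∏ k ∈ Finset.Icc (j+1) n, y (a + (k : ZMod n)) =
        (∏ k ∈ Finset.Icc (j+1) (n-1), y (a + (k : ZMod n))) * y a := by
      rw [show Finset.Icc (j+1) n = Finset.Icc (j+1) ((n-1)+1) by
            rw [Nat.sub_add_cancel hn],
        Finset.prod_Icc_succ_top (by omega)]
      have : ((((n-1:ℕ))+1 : ℕ) : ZMod n) = 0 := by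
        rw [show (n-1)+1 = n by omega]; exact_mod_cast ZMod.natCast_self n
      rw [this, add_zero]
    rw [hTj j, hy']
    ring
  have h2 : x (a + 1) * lam n x y z (a + 1) = ∑ j ∈ Finset.range n, T (j + 1) := by
    rw [lam, Finset.mul_sum]
    refine Finset.sum_congr rfl fun j hj => ?_
    have hj' : j + 1 ≤ n := mem_range.1 hj
    have e1 : ∏ k ∈ Finset.Icc 1 j, x ((a+1) + (k : ZMod n)) =
        ∏ k ∈ Finset.Icc 2 (j+1), x (a + (k : ZMod n)) := prod_Icc_shift x a 1 j
    have e2 : ∏ k ∈ Finset.Icc (j+1) (n-1), y ((a+1) + (k : ZMod n)) =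
        ∏ k ∈ Finset.Icc (j+2) n, y (a + (k : ZMod n)) := by
      rw [prod_Icc_shift y a (j+1) (n-1), show (n-1)+1 = n by omega]
    have e3 : ∏ k ∈ Finset.Icc 1 (j+1), x (a + (k : ZMod n)) =
        x (a + ((1:ℕ) : ZMod n)) * ∏ k ∈ Finset.Icc 2 (j+1), x (a + (k : ZMod n)) := by
      rw [← Finset.Ico_add_one_right_eq_Icc, ← Finset.Ico_add_one_right_eq_Icc,
        Finset.prod_eq_prod_Ico_succ_bot (by omega)]
    have e4 : (a+1) + (j : ZMod n) = a + ((j+1 : ℕ) : ZMod n) := by push_cast; ring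
    rw [hTj (j+1), e1, e2, e4, e3, show ((1:ℕ) : ZMod n) = 1 from Nat.cast_one,
      show j + 1 + 1 = j + 2 from rfl]
    ring
  have h3 := telescope T n
  have hT0 : T 0 = z a * ∏ c : ZMod n, y c := by
    rw [hTj 0]
    simp only [Finset.Icc_self, Nat.cast_zero, add_zero, zero_add]
    rw [prod_Icc_one_n y a]
    simp
  have hTn : T n = z a * ∏ c : ZMod n, x c := by
    rw [hTj n, prod_Icc_one_n x a]
    rw [Finset.Icc_eq_empty (by omega), ZMod.natCast_self]
    simp [mul_comm]
  rw [h1, h2] at *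
  linarith [h3]

end LamAux

open LamAux

/-- with `x̃_i := y_{i−1} λ_{i−1}/λ_i`, `ỹ_i := x_{i+1} λ_{i+1}/λ_i` and
`z̃ := z`, one has `λ_i(x̃, ỹ, z̃) = λ_i(x, y, z)` for every `i`. -/
theorem lam_tilde_eq (n : ℕ) [NeZero n] (x y z : ZMod n → ℝ)
    (hx : ∀ i, 0 < x i) (hy : ∀ i, 0 < y i) (hz : ∀ i, 0 < z i)
    (xt yt : ZMod n → ℝ)
    (hxt : ∀ i, xt i = y (i - 1) * lam n x y z (i - 1) / lam n x y z i)
    (hyt : ∀ i, yt i = x (i + 1) * lam n x y z (i + 1) / lam n x y z i)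
    (i : ZMod n) :
    lam n xt yt z i = lam n x y z i := by
  have hn : 1 ≤ n := Nat.one_le_iff_ne_zero.2 (NeZero.ne n)
  -- abbreviations
  set F : ℕ → ℝ := fun j => lam n x y z (i + (j : ZMod n)) with hF
  have hFj : ∀ j : ℕ, F j = lam n x y z (i + (j : ZMod n)) := fun _ => rfl
  set X : ℝ := ∏ c : ZMod n, x c with hX
  set Y : ℝ := ∏ c : ZMod n, y c with hY
  have hFpos : ∀ j, 0 < F j := fun j => lam_pos x y z hx hy hz _
  have hFne : ∀ j, F j ≠ 0 := fun j => ne_of_gt (hFpos j)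
  have hF0 : F 0 = lam n x y z i := by
    have h0 : ((0:ℕ) : ZMod n) = 0 := Nat.cast_zero
    rw [hFj 0, h0, add_zero]
  have hFn : F n = F 0 := by
    rw [hFj n, hFj 0, ZMod.natCast_self, Nat.cast_zero]
  -- the recurrence
  have hrec : ∀ j : ℕ, y (i + (j : ZMod n)) * F j + z (i + (j : ZMod n)) * X =
      x (i + ((j+1 : ℕ) : ZMod n)) * F (j+1) + z (i + (j : ZMod n)) * Y := by
    intro j
    have := key x y z (i + (j : ZMod n))
    rw [show i + (j : ZMod n) + 1 = i + ((j+1 : ℕ) : ZMod n) by push_cast; ring] at this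
    rw [hFj j, hFj (j+1)]
    exact this
  -- values of the new weights
  have hxt' : ∀ j : ℕ, xt (i + ((j+1:ℕ) : ZMod n)) =
      y (i + (j : ZMod n)) * F j / F (j+1) := by
    intro j
    rw [hxt, show i + ((j+1:ℕ) : ZMod n) - 1 = i + (j : ZMod n) by push_cast; ring,
      hFj j, hFj (j+1)]
  have hyt' : ∀ j : ℕ, yt (i + (j : ZMod n)) =
      x (i + ((j+1:ℕ) : ZMod n)) * F (j+1) / F j := by
    intro j
    rw [hyt, show i + (j : ZMod n) + 1 = i + ((j+1:ℕ) : ZMod n) by push_cast; ring,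
      hFj j, hFj (j+1)]
  -- telescoping products of the new weights
  have prodXT : ∀ j : ℕ, ∏ k ∈ Finset.Icc 1 j, xt (i + (k : ZMod n)) =
      (∏ k ∈ Finset.range j, y (i + (k : ZMod n))) * F 0 / F j := by
    intro j
    induction j with
    | zero => simp [div_self (hFne 0)]
    | succ j ih =>
      rw [Finset.prod_Icc_succ_top (by omega), ih, hxt' j, Finset.prod_range_succ]
      field_simp [hFne]
  have prodYT : ∀ d m : ℕ, m + d = n →
      ∏ k ∈ Finset.Icc m (n-1), yt (i + (k : ZMod n)) =
      (∏ k ∈ Finset.Icc (m+1) n, x (i + (k : ZMod n))) * F 0 / F m := by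
    intro d
    induction d with
    | zero =>
      intro m hm
      have hm' : m = n := by omega
      subst hm'
      rw [Finset.Icc_eq_empty (by omega), Finset.Icc_eq_empty (by omega), hFn]
      simp [div_self (hFne 0)]
    | succ d ih =>
      intro m hm
      have hmn : m < n := by omega
      have h1 : ∏ k ∈ Finset.Icc m (n-1), yt (i + (k : ZMod n)) =
          yt (i + (m : ZMod n)) * ∏ k ∈ Finset.Icc (m+1) (n-1), yt (i + (k : ZMod n)) := by
        rw [← Finset.Ico_add_one_right_eq_Icc, ← Finset.Ico_add_one_right_eq_Icc,
          Finset.prod_eq_prod_Ico_succ_bot (by omega)]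
      have h2 : ∏ k ∈ Finset.Icc (m+1) n, x (i + (k : ZMod n)) =
          x (i + ((m+1:ℕ) : ZMod n)) * ∏ k ∈ Finset.Icc (m+2) n, x (i + (k : ZMod n)) := by
        rw [← Finset.Ico_add_one_right_eq_Icc, ← Finset.Ico_add_one_right_eq_Icc,
          Finset.prod_eq_prod_Ico_succ_bot (by omega)]
      rw [h1, ih (m+1) (by omega), hyt' m, h2]
      field_simp [hFne]
  -- rewrite the left-hand side termwise
  have hLHS : lam n xt yt z i = ∑ j ∈ Finset.range n,
      ((∏ k ∈ Finset.range j, y (i + (k : ZMod n))) * F 0 / F j) * z (i + (j : ZMod n)) *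
        ((∏ k ∈ Finset.Icc (j+2) n, x (i + (k : ZMod n))) * F 0 / F (j+1)) := by
    rw [lam]
    refine Finset.sum_congr rfl fun j hj => ?_
    have hj' : j < n := mem_range.1 hj
    rw [prodXT j, prodYT (n - (j+1)) (j+1) (by omega)]
  rw [hLHS]
  -- constants
  have hPn : ∏ k ∈ Finset.range n, y (i + (k : ZMod n)) = Y := prod_range_shift y i
  have hR0 : ∏ k ∈ Finset.Icc 1 n, x (i + (k : ZMod n)) = X := prod_Icc_one_n x i
  have hRsucc : ∀ j : ℕ, j < n → ∏ k ∈ Finset.Icc (j+1) n, x (i + (k : ZMod n)) =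
      x (i + ((j+1:ℕ) : ZMod n)) * ∏ k ∈ Finset.Icc (j+2) n, x (i + (k : ZMod n)) := by
    intro j hj
    rw [← Finset.Ico_add_one_right_eq_Icc, ← Finset.Ico_add_one_right_eq_Icc,
      Finset.prod_eq_prod_Ico_succ_bot (by omega)]
  have hxpos : ∀ (s t : ℕ), 0 < ∏ k ∈ Finset.Icc s t, x (i + (k : ZMod n)) :=
    fun s t => Finset.prod_pos fun _ _ => hx _
  have hIccIco : ∀ m : ℕ, Finset.Icc m (n-1) = Finset.Ico m n := by
    intro m
    rw [← Finset.Ico_add_one_right_eq_Icc]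
    congr 1
    omega
  have hxpos : ∀ (s t : ℕ), 0 < ∏ k ∈ Finset.Icc s t, x (i + (k : ZMod n)) :=
    fun s t => Finset.prod_pos fun _ _ => hx _
  by_cases hYX : Y = X
  · -- degenerate case: termwise equality
    have hstep : ∀ j : ℕ, y (i + (j : ZMod n)) * F j =
        x (i + ((j+1:ℕ) : ZMod n)) * F (j+1) := by
      intro j
      have := hrec j
      rw [hYX] at this
      linarith
    have hFA : ∀ j : ℕ, F j * ∏ k ∈ Finset.Icc 1 j, x (i + (k : ZMod n)) =
        F 0 * ∏ k ∈ Finset.range j, y (i + (k : ZMod n)) := by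
      intro j
      induction j with
      | zero => simp
      | succ j ih =>
        rw [Finset.prod_Icc_succ_top (by omega), Finset.prod_range_succ]
        linear_combination (-(∏ k ∈ Finset.Icc 1 j, x (i + (k : ZMod n)))) * hstep j +
          y (i + (j : ZMod n)) * ih
    rw [lam]
    refine Finset.sum_congr rfl fun j hj => ?_
    have hj' : j < n := mem_range.1 hj
    have hsplitx : (∏ k ∈ Finset.Icc 1 (j+1), x (i + (k : ZMod n))) *
        (∏ k ∈ Finset.Icc (j+2) n, x (i + (k : ZMod n))) =
        ∏ k ∈ Finset.Icc 1 n, x (i + (k : ZMod n)) := by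
      rw [← Finset.Ico_add_one_right_eq_Icc, ← Finset.Ico_add_one_right_eq_Icc, ← Finset.Ico_add_one_right_eq_Icc]
      exact Finset.prod_Ico_consecutive _ (by omega) (by omega)
    have hsplity : (∏ k ∈ Finset.range (j+1), y (i + (k : ZMod n))) *
        (∏ k ∈ Finset.Icc (j+1) (n-1), y (i + (k : ZMod n))) =
        ∏ k ∈ Finset.range n, y (i + (k : ZMod n)) := by
      rw [hIccIco, Finset.range_eq_Ico, Finset.range_eq_Ico]
      exact Finset.prod_Ico_consecutive _ (by omega) (by omega)
    set x1 : ℝ := x (i + ((j+1:ℕ) : ZMod n)) with hx1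
    set Pj : ℝ := ∏ k ∈ Finset.range j, y (i + (k : ZMod n)) with hPj
    set Aj : ℝ := ∏ k ∈ Finset.Icc 1 j, x (i + (k : ZMod n)) with hAj
    set Bj : ℝ := ∏ k ∈ Finset.Icc (j+1) (n-1), y (i + (k : ZMod n)) with hBj
    set Rj : ℝ := ∏ k ∈ Finset.Icc (j+2) n, x (i + (k : ZMod n)) with hRj
    have hA1 : F j * Aj = F 0 * Pj := hFA j
    have hA2 : F (j+1) * (Aj * x1) = F 0 * (Pj * y (i + (j : ZMod n))) := by
      have h := hFA (j+1)
      rw [Finset.prod_Icc_succ_top (by omega), Finset.prod_range_succ] at h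
      exact h
    have hAR : (Aj * x1) * Rj = X := by
      rw [← hR0, ← hsplitx]
      congr 1
      rw [hAj, hx1]
      exact (Finset.prod_Icc_succ_top (by omega) _).symm
    have hPB : (Pj * y (i + (j : ZMod n))) * Bj = Y := by
      rw [← hPn, ← hsplity]
      congr 1
      rw [hPj]
      exact (Finset.prod_range_succ _ _).symm
    have e1 : Pj * F 0 / F j = Aj := by
      rw [div_eq_iff (hFne j)]
      linear_combination -hA1
    have e2 : Rj * F 0 / F (j+1) = Bj := by
      rw [div_eq_iff (hFne (j+1))]
      have hAx : Aj * x1 ≠ 0 := ne_of_gt (mul_pos (hxpos 1 j) (hx _))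
      refine mul_right_cancel₀ hAx ?_
      linear_combination F 0 * hAR - Bj * hA2 - F 0 * hPB - F 0 * hYX
    rw [e1, e2]
  · -- generic case: telescoping
    have hYX' : Y - X ≠ 0 := sub_ne_zero.2 hYX
    set Q : ℕ → ℝ := fun m =>
      (∏ k ∈ Finset.range m, y (i + (k : ZMod n))) *
        (∏ k ∈ Finset.Icc (m+1) n, x (i + (k : ZMod n))) / F m with hQ
    have hQm : ∀ m, Q m = (∏ k ∈ Finset.range m, y (i + (k : ZMod n))) *
        (∏ k ∈ Finset.Icc (m+1) n, x (i + (k : ZMod n))) / F m := fun m => rfl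
    have hterm : ∀ j ∈ Finset.range n,
        ((∏ k ∈ Finset.range j, y (i + (k : ZMod n))) * F 0 / F j) * z (i + (j : ZMod n)) *
          ((∏ k ∈ Finset.Icc (j+2) n, x (i + (k : ZMod n))) * F 0 / F (j+1)) =
        (F 0 * F 0 / (Y - X)) * (Q (j+1) - Q j) := by
      intro j hj
      have hj' : j < n := mem_range.1 hj
      have hd : z (i + (j : ZMod n)) * (Y - X) =
          y (i + (j : ZMod n)) * F j - x (i + ((j+1:ℕ) : ZMod n)) * F (j+1) := by
        linear_combination (-1 : ℝ) * hrec j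
      rw [hQm (j+1), hQm j, Finset.prod_range_succ, hRsucc j hj',
        div_sub_div _ _ (hFne (j+1)) (hFne j), div_mul_div_comm]
      have step : ((∏ k ∈ Finset.range j, y (i + (k : ZMod n))) * F 0 / F j) * z (i + (j : ZMod n)) *
          ((∏ k ∈ Finset.Icc (j+2) n, x (i + (k : ZMod n))) * F 0 / F (j+1)) =
          ((∏ k ∈ Finset.range j, y (i + (k : ZMod n))) * F 0 * z (i + (j : ZMod n)) *
            ((∏ k ∈ Finset.Icc (j+2) n, x (i + (k : ZMod n))) * F 0)) / (F j * F (j+1)) := by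
        ring
      rw [step, div_eq_div_iff (mul_ne_zero (hFne j) (hFne (j+1)))
        (mul_ne_zero hYX' (mul_ne_zero (hFne (j+1)) (hFne j)))]
      linear_combination (F 0 * F 0 * (∏ k ∈ Finset.range j, y (i + (k : ZMod n))) *
        (∏ k ∈ Finset.Icc (j+2) n, x (i + (k : ZMod n))) * F j * F (j+1)) * hd
    rw [Finset.sum_congr rfl hterm, ← Finset.mul_sum, Finset.sum_range_sub Q,
      hQm n, hQm 0, hFn]
    rw [Finset.Icc_eq_empty (show ¬ n+1 ≤ n by omega), Finset.prod_empty, hPn, hR0]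
    rw [← hF0]
    field_simp [hFne]
    rw [Finset.prod_range_zero, mul_one]
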